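/- Improved off-policy lower bound (advantage realignment): For learning policy π_T, behavior policy β_T, and any policy π, with ε^π = max_s |E_{a∼π}[A_{π_T}(s,a)]|, we have J(π) − J(π_T) ≥ (1/(1−γ)) E_{s∼d^{β_T}, a∼β_T(·|s)}[ (π(a|s)/β_T(a|s)) A_{π_T}(s,a) − (2γε^π/(1−γ)) D_TV(β_T‖π)[s] ]. -/

import Mathlib

open Finset

noncomputable section

variable {S A : Type*} [Fintype S] [Fintype A] [DecidableEq S]

/-- A policy assigns a probability distribution over actions to each state. -/
def IsPolicy (p : S → A → ℝ) : Prop :=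
  (∀ s a, 0 ≤ p s a) ∧ ∀ s, ∑ a, p s a = 1

/-- A finite Markov decision process with discount factor `γ ∈ [0,1)`. -/
structure FinMDP (S A : Type*) [Fintype S] [Fintype A] where
  P : S → A → S → ℝ
  P_nonneg : ∀ s a s', 0 ≤ P s a s'
  P_sum : ∀ s a, ∑ s', P s a s' = 1
  r : S → A → ℝ
  μ : S → ℝ
  μ_nonneg : ∀ s, 0 ≤ μ s
  μ_sum : ∑ s, μ s = 1
  γ : ℝ
  γ_nonneg : 0 ≤ γ
  γ_lt_one : γ < 1

/-- One step of the state-distribution evolution under a policy. -/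
def stepDist (M : FinMDP S A) (π : S → A → ℝ) (d : S → ℝ) : S → ℝ :=
  fun s' => ∑ s, ∑ a, d s * π s a * M.P s a s'

/-- Distribution of the state at time `t`, starting from `μ`, following `π`. -/
def stateDist (M : FinMDP S A) (π : S → A → ℝ) : ℕ → S → ℝ
  | 0 => M.μ
  | t + 1 => stepDist M π (stateDist M π t)

/-- Expected discounted return `J(π)` with initial distribution `μ`. -/
def Jret (M : FinMDP S A) (π : S → A → ℝ) : ℝ :=
  ∑' t : ℕ, M.γ ^ t * ∑ s, stateDist M π t s * ∑ a, π s a * M.r s a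

/-- Discounted future state visitation distribution `d^π`. -/
def dVisit (M : FinMDP S A) (π : S → A → ℝ) (s : S) : ℝ :=
  (1 - M.γ) * ∑' t : ℕ, M.γ ^ t * stateDist M π t s

/-- Distribution of the state at time `t` starting deterministically from `s₀`. -/
def stateDistFrom (M : FinMDP S A) (π : S → A → ℝ) (s₀ : S) : ℕ → S → ℝ
  | 0 => fun s => if s = s₀ then 1 else 0
  | t + 1 => stepDist M π (stateDistFrom M π s₀ t)

/-- State value function `V_π(s₀)`: expected discounted return starting from `s₀`. -/
def Vval (M : FinMDP S A) (π : S → A → ℝ) (s₀ : S) : ℝ :=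
  ∑' t : ℕ, M.γ ^ t * ∑ s, stateDistFrom M π s₀ t s * ∑ a, π s a * M.r s a

/-- State-action value function `Q_π(s,a)`. -/
def Qval (M : FinMDP S A) (π : S → A → ℝ) (s : S) (a : A) : ℝ :=
  M.r s a + M.γ * ∑ s', M.P s a s' * Vval M π s'

/-- Advantage function `A_π(s,a) = Q_π(s,a) - V_π(s)`. -/
def Adv (M : FinMDP S A) (π : S → A → ℝ) (s : S) (a : A) : ℝ :=
  Qval M π s a - Vval M π s

/-- Total variation distance between two distributions over actions. -/
def DTV (p q : A → ℝ) : ℝ := (1 / 2) * ∑ a, |p a - q a|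

/-- KL divergence between two distributions over actions. -/
def DKL (p q : A → ℝ) : ℝ := ∑ a, p a * Real.log (p a / q a)

-- ===== auxiliary lemmas =====

/-- Policy-averaged transition matrix. -/
def Pm (M : FinMDP S A) (p : S → A → ℝ) (s s' : S) : ℝ := ∑ a, p s a * M.P s a s'

lemma Pm_nonneg (M : FinMDP S A) {p : S → A → ℝ} (hp : IsPolicy p) (s s' : S) :
    0 ≤ Pm M p s s' :=
  Finset.sum_nonneg fun a _ => mul_nonneg (hp.1 s a) (M.P_nonneg s a s')

lemma Pm_sum (M : FinMDP S A) {p : S → A → ℝ} (hp : IsPolicy p) (s : S) :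
    ∑ s', Pm M p s s' = 1 := by
  unfold Pm
  rw [Finset.sum_comm]
  simp only [← Finset.mul_sum, M.P_sum, mul_one]
  exact hp.2 s

lemma stepDist_eq (M : FinMDP S A) (p : S → A → ℝ) (d : S → ℝ) (s' : S) :
    stepDist M p d s' = ∑ s, d s * Pm M p s s' := by
  unfold stepDist Pm
  refine Finset.sum_congr rfl fun s _ => ?_
  rw [Finset.mul_sum]
  exact Finset.sum_congr rfl fun a _ => by ring

lemma stepDist_nonneg (M : FinMDP S A) {p : S → A → ℝ} (hp : IsPolicy p) {d : S → ℝ}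
    (hd : ∀ s, 0 ≤ d s) (s' : S) : 0 ≤ stepDist M p d s' := by
  rw [stepDist_eq]
  exact Finset.sum_nonneg fun s _ => mul_nonneg (hd s) (Pm_nonneg M hp s s')

lemma stepDist_sum (M : FinMDP S A) {p : S → A → ℝ} (hp : IsPolicy p) (d : S → ℝ) :
    ∑ s', stepDist M p d s' = ∑ s, d s := by
  simp only [stepDist_eq]
  rw [Finset.sum_comm]
  simp only [← Finset.mul_sum, Pm_sum M hp, mul_one]

lemma stateDist_nonneg (M : FinMDP S A) {p : S → A → ℝ} (hp : IsPolicy p) (t : ℕ) (s : S) :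
    0 ≤ stateDist M p t s := by
  induction t generalizing s with
  | zero => exact M.μ_nonneg s
  | succ t ih => exact stepDist_nonneg M hp ih s

lemma stateDist_sum (M : FinMDP S A) {p : S → A → ℝ} (hp : IsPolicy p) (t : ℕ) :
    ∑ s, stateDist M p t s = 1 := by
  induction t with
  | zero => exact M.μ_sum
  | succ t ih => rw [stateDist, stepDist_sum M hp, ih]

lemma stateDistFrom_nonneg (M : FinMDP S A) {p : S → A → ℝ} (hp : IsPolicy p) (s₀ : S)
    (t : ℕ) (s : S) : 0 ≤ stateDistFrom M p s₀ t s := by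
  induction t generalizing s with
  | zero => unfold stateDistFrom; positivity
  | succ t ih => exact stepDist_nonneg M hp ih s

lemma stateDistFrom_sum (M : FinMDP S A) {p : S → A → ℝ} (hp : IsPolicy p) (s₀ : S) (t : ℕ) :
    ∑ s, stateDistFrom M p s₀ t s = 1 := by
  induction t with
  | zero => simp [stateDistFrom]
  | succ t ih => rw [stateDistFrom, stepDist_sum M hp, ih]

/-- Expectation under a subprobability vector is bounded by the sup of |f|. -/
lemma absexp_le (d f : S → ℝ) (hd : ∀ s, 0 ≤ d s) (hsum : ∑ s, d s = 1) (C : ℝ)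
    (hf : ∀ s, |f s| ≤ C) : |∑ s, d s * f s| ≤ C := by
  calc |∑ s, d s * f s| ≤ ∑ s, |d s * f s| := Finset.abs_sum_le_sum_abs _ _
    _ ≤ ∑ s, d s * C := by
        refine Finset.sum_le_sum fun s _ => ?_
        rw [abs_mul, abs_of_nonneg (hd s)]
        exact mul_le_mul_of_nonneg_left (hf s) (hd s)
    _ = C := by rw [← Finset.sum_mul, hsum, one_mul]

lemma summable_geom_mul (M : FinMDP S A) (C : ℝ) (f : ℕ → ℝ) (hf : ∀ t, |f t| ≤ C) :
    Summable (fun t => M.γ ^ t * f t) := by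
  refine Summable.of_norm_bounded
    ((summable_geometric_of_lt_one M.γ_nonneg M.γ_lt_one).mul_left C) fun t => ?_
  rw [Real.norm_eq_abs, abs_mul, abs_pow, abs_of_nonneg M.γ_nonneg, mul_comm]
  exact mul_le_mul_of_nonneg_right (hf t) (pow_nonneg M.γ_nonneg t)

set_option linter.unusedSectionVars false

lemma stateDist_le_one (M : FinMDP S A) {p : S → A → ℝ} (hp : IsPolicy p) (t : ℕ) (s : S) :
    stateDist M p t s ≤ 1 := by
  rw [← stateDist_sum M hp t]
  exact Finset.single_le_sum (fun i _ => stateDist_nonneg M hp t i) (mem_univ s)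

lemma stepDist_lin (M : FinMDP S A) (p : S → A → ℝ) (c : S → ℝ) (f : S → S → ℝ) (s' : S) :
    stepDist M p (fun s => ∑ i, c i * f i s) s' = ∑ i, c i * stepDist M p (f i) s' := by
  simp only [stepDist_eq, Finset.sum_mul, Finset.mul_sum]
  rw [Finset.sum_comm]
  exact Finset.sum_congr rfl fun i _ => Finset.sum_congr rfl fun s _ => by ring

lemma stateDist_decomp (M : FinMDP S A) (p : S → A → ℝ) (t : ℕ) (s : S) :
    stateDist M p t s = ∑ s₀, M.μ s₀ * stateDistFrom M p s₀ t s := by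
  induction t generalizing s with
  | zero => simp [stateDist, stateDistFrom, mul_ite, eq_comm]
  | succ t ih =>
      have hfun : stateDist M p t = fun s => ∑ s₀, M.μ s₀ * stateDistFrom M p s₀ t s :=
        funext fun s => ih s
      show stepDist M p (stateDist M p t) s = _
      rw [hfun, stepDist_lin]
      rfl

lemma Jret_eq_sum_Vval [Nonempty S] (M : FinMDP S A) {p : S → A → ℝ} (hp : IsPolicy p) :
    Jret M p = ∑ s₀, M.μ s₀ * Vval M p s₀ := by
  set rp : S → ℝ := fun s => ∑ a, p s a * M.r s a with hrp
  set C : ℝ := univ.sup' univ_nonempty fun s => |rp s| with hC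
  have hCle : ∀ (d : S → ℝ), (∀ s, 0 ≤ d s) → (∑ s, d s = 1) → |∑ s, d s * rp s| ≤ C :=
    fun d hd hs => absexp_le d rp hd hs C fun s => by
      rw [hC]; exact Finset.le_sup' (fun s => |rp s|) (mem_univ s)
  have hsum : ∀ s₀, Summable fun t => M.γ ^ t * ∑ s, stateDistFrom M p s₀ t s * rp s :=
    fun s₀ => summable_geom_mul M C _ fun t =>
      hCle _ (stateDistFrom_nonneg M hp s₀ t) (stateDistFrom_sum M hp s₀ t)
  have key : ∀ t, M.γ ^ t * ∑ s, stateDist M p t s * rp s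
      = ∑ s₀, M.μ s₀ * (M.γ ^ t * ∑ s, stateDistFrom M p s₀ t s * rp s) := by
    intro t
    have h1 : (∑ s, stateDist M p t s * rp s)
        = ∑ s₀, M.μ s₀ * ∑ s, stateDistFrom M p s₀ t s * rp s := by
      simp only [stateDist_decomp M p t, Finset.sum_mul]
      rw [Finset.sum_comm]
      exact Finset.sum_congr rfl fun s₀ _ => by
        rw [Finset.mul_sum]; exact Finset.sum_congr rfl fun s _ => by ring
    rw [h1, Finset.mul_sum]
    exact Finset.sum_congr rfl fun s₀ _ => by ring
  unfold Jret
  show ∑' t, M.γ ^ t * ∑ s, stateDist M p t s * rp s = _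
  simp only [key]
  rw [Summable.tsum_finsetSum fun s₀ _ => (hsum s₀).mul_left (M.μ s₀)]
  exact Finset.sum_congr rfl fun s₀ _ => tsum_mul_left

lemma dVisit_pair [Nonempty S] (M : FinMDP S A) {p : S → A → ℝ} (hp : IsPolicy p) (g : S → ℝ) :
    ∑ s, dVisit M p s * g s
      = (1 - M.γ) * ∑' t, M.γ ^ t * ∑ s, stateDist M p t s * g s := by
  have hsum : ∀ s : S, Summable fun t => M.γ ^ t * stateDist M p t s * g s := by
    intro s
    have := summable_geom_mul M (1 * |g s|) (fun t => stateDist M p t s * g s) ?_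
    · exact this.congr fun t => by ring
    · intro t
      rw [abs_mul]
      exact mul_le_mul_of_nonneg_right
        (by rw [abs_of_nonneg (stateDist_nonneg M hp t s)]; exact stateDist_le_one M hp t s)
        (abs_nonneg _)
  calc ∑ s, dVisit M p s * g s
      = (1 - M.γ) * ∑ s, ∑' t, M.γ ^ t * stateDist M p t s * g s := by
        rw [Finset.mul_sum]
        refine Finset.sum_congr rfl fun s _ => ?_
        unfold dVisit
        rw [mul_assoc, ← tsum_mul_right]
    _ = (1 - M.γ) * ∑' t, ∑ s, M.γ ^ t * stateDist M p t s * g s := by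
        rw [← Summable.tsum_finsetSum fun s _ => hsum s]
    _ = (1 - M.γ) * ∑' t, M.γ ^ t * ∑ s, stateDist M p t s * g s := by
        congr 1
        refine tsum_congr fun t => ?_
        rw [Finset.mul_sum]
        exact Finset.sum_congr rfl fun s _ => by ring

lemma tsum_sub_telescope (b : ℕ → ℝ) (hb : Summable fun t => b (t + 1) - b t)
    (h0 : Filter.Tendsto b Filter.atTop (nhds 0)) : ∑' t, (b (t + 1) - b t) = -b 0 := by
  refine HasSum.tsum_eq ?_
  rw [hb.hasSum_iff_tendsto_nat]
  have heq : ∀ n, ∑ i ∈ Finset.range n, (b (i + 1) - b i) = b n - b 0 :=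
    fun n => Finset.sum_range_sub b n
  simp only [heq]
  simpa using h0.sub_const (b 0)

lemma g_decomp (M : FinMDP S A) {π : S → A → ℝ} (hπ : IsPolicy π) (πT : S → A → ℝ) (s : S) :
    ∑ a, π s a * Adv M πT s a
      = (∑ a, π s a * M.r s a)
        + M.γ * ∑ s', Pm M π s s' * Vval M πT s' - Vval M πT s := by
  have h2 : ∑ a, π s a * ∑ s', M.P s a s' * Vval M πT s'
      = ∑ s', Pm M π s s' * Vval M πT s' := by
    simp only [Finset.mul_sum, Pm, Finset.sum_mul]
    rw [Finset.sum_comm]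
    exact Finset.sum_congr rfl fun s' _ => Finset.sum_congr rfl fun a _ => by ring
  calc ∑ a, π s a * Adv M πT s a
      = ∑ a, (π s a * M.r s a + M.γ * (π s a * ∑ s', M.P s a s' * Vval M πT s')
          - π s a * Vval M πT s) := by
        refine Finset.sum_congr rfl fun a _ => ?_
        unfold Adv Qval
        ring
    _ = (∑ a, π s a * M.r s a) + M.γ * ∑ a, π s a * ∑ s', M.P s a s' * Vval M πT s'
          - (∑ a, π s a) * Vval M πT s := by
        rw [Finset.sum_sub_distrib, Finset.sum_add_distrib, ← Finset.mul_sum, ← Finset.sum_mul]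
    _ = _ := by rw [h2, hπ.2, one_mul]

lemma step_pair (M : FinMDP S A) (π : S → A → ℝ) (d V : S → ℝ) :
    ∑ s', stepDist M π d s' * V s' = ∑ s, d s * ∑ s', Pm M π s s' * V s' := by
  simp only [stepDist_eq, Finset.sum_mul]
  rw [Finset.sum_comm]
  exact Finset.sum_congr rfl fun s _ => by
    rw [Finset.mul_sum]; exact Finset.sum_congr rfl fun s' _ => by ring

lemma perf_diff [Nonempty S] (M : FinMDP S A) {πT π : S → A → ℝ}
    (hπT : IsPolicy πT) (hπ : IsPolicy π) :
    Jret M π - Jret M πT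
      = ∑' t, M.γ ^ t * ∑ s, stateDist M π t s * (∑ a, π s a * Adv M πT s a) := by
  set VT : S → ℝ := Vval M πT with hVT
  set rπ : S → ℝ := fun s => ∑ a, π s a * M.r s a with hrπ
  set g : S → ℝ := fun s => ∑ a, π s a * Adv M πT s a with hg
  set ρ := stateDist M π with hρ
  set CV : ℝ := univ.sup' univ_nonempty fun s => |VT s| with hCV
  set Cr : ℝ := univ.sup' univ_nonempty fun s => |rπ s| with hCr
  have hρn : ∀ t s, 0 ≤ ρ t s := fun t s => stateDist_nonneg M hπ t s
  have hρs : ∀ t, ∑ s, ρ t s = 1 := fun t => stateDist_sum M hπ t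
  have hVb : ∀ t, |∑ s, ρ t s * VT s| ≤ CV := fun t =>
    absexp_le _ _ (hρn t) (hρs t) CV fun s => by
      rw [hCV]; exact Finset.le_sup' (fun s => |VT s|) (mem_univ s)
  have hrb : ∀ t, |∑ s, ρ t s * rπ s| ≤ Cr := fun t =>
    absexp_le _ _ (hρn t) (hρs t) Cr fun s => by
      rw [hCr]; exact Finset.le_sup' (fun s => |rπ s|) (mem_univ s)
  set b : ℕ → ℝ := fun t => M.γ ^ t * ∑ s, ρ t s * VT s with hb
  have key1 : ∀ t, M.γ ^ t * ∑ s, ρ t s * g s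
      = M.γ ^ t * (∑ s, ρ t s * rπ s) + (b (t + 1) - b t) := by
    intro t
    have hgd : ∑ s, ρ t s * g s
        = (∑ s, ρ t s * rπ s) + M.γ * (∑ s, ρ (t+1) s * VT s) - ∑ s, ρ t s * VT s := by
      have hstep : ∑ s, ρ (t+1) s * VT s = ∑ s, ρ t s * ∑ s', Pm M π s s' * VT s' :=
        step_pair M π (ρ t) VT
      rw [hstep]
      calc ∑ s, ρ t s * g s
          = ∑ s, (ρ t s * rπ s + M.γ * (ρ t s * ∑ s', Pm M π s s' * VT s')
              - ρ t s * VT s) := by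
            refine Finset.sum_congr rfl fun s _ => ?_
            simp only [hg]
            rw [g_decomp M hπ πT s]
            ring
        _ = _ := by
            rw [Finset.sum_sub_distrib, Finset.sum_add_distrib, ← Finset.mul_sum]
    rw [hgd, hb]
    simp only []
    ring
  have h1 : Summable fun t => M.γ ^ t * ∑ s, ρ t s * rπ s := summable_geom_mul M Cr _ hrb
  have h2 : Summable b := summable_geom_mul M CV _ hVb
  have hbsum : Summable fun t => b (t + 1) - b t :=
    ((summable_nat_add_iff 1).mpr h2).sub h2
  have hb0 : Filter.Tendsto b Filter.atTop (nhds 0) := by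
    have hgt : Filter.Tendsto (fun t => CV * M.γ ^ t) Filter.atTop (nhds 0) := by
      simpa using
        (tendsto_pow_atTop_nhds_zero_of_lt_one M.γ_nonneg M.γ_lt_one).const_mul CV
    refine squeeze_zero_norm (fun t => ?_) hgt
    rw [hb, Real.norm_eq_abs, abs_mul, abs_pow, abs_of_nonneg M.γ_nonneg, mul_comm]
    exact mul_le_mul_of_nonneg_right (hVb t) (pow_nonneg M.γ_nonneg t)
  have htel : ∑' t, (b (t + 1) - b t) = -b 0 := tsum_sub_telescope b hbsum hb0
  have hJπ : Jret M π = ∑' t, M.γ ^ t * ∑ s, ρ t s * rπ s := rfl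
  have hJT : Jret M πT = b 0 := by
    rw [Jret_eq_sum_Vval M hπT, hb]
    simp [hρ, stateDist, hVT]
  rw [tsum_congr key1, Summable.tsum_add h1 hbsum, htel, ← hJπ, hJT]
  ring

lemma stepDist_sub (M : FinMDP S A) (p : S → A → ℝ) (d₁ d₂ : S → ℝ) (s' : S) :
    stepDist M p (fun s => d₁ s - d₂ s) s' = stepDist M p d₁ s' - stepDist M p d₂ s' := by
  simp only [stepDist_eq, ← Finset.sum_sub_distrib]
  exact Finset.sum_congr rfl fun s _ => by ring

lemma stepDist_l1 (M : FinMDP S A) {p : S → A → ℝ} (hp : IsPolicy p) (d : S → ℝ) :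
    ∑ s', |stepDist M p d s'| ≤ ∑ s, |d s| := by
  calc ∑ s', |stepDist M p d s'| ≤ ∑ s', ∑ s, |d s| * Pm M p s s' := by
        refine Finset.sum_le_sum fun s' _ => ?_
        rw [stepDist_eq]
        refine (Finset.abs_sum_le_sum_abs _ _).trans (Finset.sum_le_sum fun s _ => ?_)
        rw [abs_mul, abs_of_nonneg (Pm_nonneg M hp s s')]
    _ = ∑ s, |d s| := by
        rw [Finset.sum_comm]
        simp only [← Finset.mul_sum, Pm_sum M hp, mul_one]

lemma stepDist_policy_diff (M : FinMDP S A) {π β : S → A → ℝ} (σ : S → ℝ)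
    (hσ : ∀ s, 0 ≤ σ s) :
    ∑ s', |stepDist M π σ s' - stepDist M β σ s'|
      ≤ 2 * ∑ s, σ s * DTV (β s) (π s) := by
  have key : ∀ s', |stepDist M π σ s' - stepDist M β σ s'|
      ≤ ∑ s, ∑ a, σ s * |π s a - β s a| * M.P s a s' := by
    intro s'
    have hdiff : stepDist M π σ s' - stepDist M β σ s'
        = ∑ s, ∑ a, σ s * (π s a - β s a) * M.P s a s' := by
      unfold stepDist
      rw [← Finset.sum_sub_distrib]
      refine Finset.sum_congr rfl fun s _ => ?_
      rw [← Finset.sum_sub_distrib]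
      exact Finset.sum_congr rfl fun a _ => by ring
    rw [hdiff]
    refine (Finset.abs_sum_le_sum_abs _ _).trans (Finset.sum_le_sum fun s _ => ?_)
    refine (Finset.abs_sum_le_sum_abs _ _).trans (Finset.sum_le_sum fun a _ => ?_)
    rw [abs_mul, abs_mul, abs_of_nonneg (hσ s), abs_of_nonneg (M.P_nonneg s a s')]
  calc ∑ s', |stepDist M π σ s' - stepDist M β σ s'|
      ≤ ∑ s', ∑ s, ∑ a, σ s * |π s a - β s a| * M.P s a s' :=
        Finset.sum_le_sum fun s' _ => key s'
    _ = ∑ s, ∑ a, σ s * |π s a - β s a| := by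
        rw [Finset.sum_comm]
        refine Finset.sum_congr rfl fun s _ => ?_
        rw [Finset.sum_comm]
        simp only [← Finset.mul_sum, M.P_sum, mul_one]
    _ = 2 * ∑ s, σ s * DTV (β s) (π s) := by
        rw [Finset.mul_sum]
        refine Finset.sum_congr rfl fun s _ => ?_
        rw [← Finset.mul_sum]
        have habs : ∑ a, |π s a - β s a| = ∑ a, |β s a - π s a| :=
          Finset.sum_congr rfl fun a _ => abs_sub_comm _ _
        rw [habs]
        unfold DTV
        ring

lemma l1_diff_bound (M : FinMDP S A) {π β : S → A → ℝ}
    (hπ : IsPolicy π) (hβ : IsPolicy β) (t : ℕ) :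
    ∑ s, |stateDist M π t s - stateDist M β t s|
      ≤ 2 * ∑ k ∈ Finset.range t, ∑ s, stateDist M β k s * DTV (β s) (π s) := by
  induction t with
  | zero => simp [stateDist]
  | succ t ih =>
      have hsplit : ∀ s', stateDist M π (t+1) s' - stateDist M β (t+1) s'
          = stepDist M π (fun s => stateDist M π t s - stateDist M β t s) s'
            + (stepDist M π (stateDist M β t) s' - stepDist M β (stateDist M β t) s') := by
        intro s'
        rw [stepDist_sub]
        show stateDist M π (t+1) s' - stateDist M β (t+1) s' = _
        rw [stateDist, stateDist]
        ring
      calc ∑ s', |stateDist M π (t+1) s' - stateDist M β (t+1) s'|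
          ≤ (∑ s', |stepDist M π (fun s => stateDist M π t s - stateDist M β t s) s'|)
            + ∑ s', |stepDist M π (stateDist M β t) s' - stepDist M β (stateDist M β t) s'| := by
            rw [← Finset.sum_add_distrib]
            refine Finset.sum_le_sum fun s' _ => ?_
            rw [hsplit s']
            exact abs_add_le _ _
        _ ≤ (∑ s, |stateDist M π t s - stateDist M β t s|)
            + 2 * ∑ s, stateDist M β t s * DTV (β s) (π s) := by
            exact add_le_add (stepDist_l1 M hπ _)
              (stepDist_policy_diff M _ (stateDist_nonneg M hβ t))
        _ ≤ (2 * ∑ k ∈ Finset.range t, ∑ s, stateDist M β k s * DTV (β s) (π s))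
            + 2 * ∑ s, stateDist M β t s * DTV (β s) (π s) := add_le_add ih le_rfl
        _ = 2 * ∑ k ∈ Finset.range (t+1), ∑ s, stateDist M β k s * DTV (β s) (π s) := by
            rw [Finset.sum_range_succ]
            ring

lemma geom_Ico_le (γ : ℝ) (h0 : 0 ≤ γ) (h1 : γ < 1) (k N : ℕ) :
    ∑ t ∈ Finset.Ico (k+1) N, γ ^ t ≤ γ ^ (k+1) / (1 - γ) := by
  rw [Finset.sum_Ico_eq_sum_range]
  have : ∀ j, γ ^ (k + 1 + j) = γ ^ (k+1) * γ ^ j := fun j => pow_add γ (k+1) j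
  simp only [this, ← Finset.mul_sum]
  rw [div_eq_mul_inv]
  refine mul_le_mul_of_nonneg_left ?_ (pow_nonneg h0 _)
  calc ∑ j ∈ Finset.range (N - (k+1)), γ ^ j
      ≤ ∑' j : ℕ, γ ^ j :=
        Summable.sum_le_tsum _ (fun j _ => pow_nonneg h0 j) (summable_geometric_of_lt_one h0 h1)
    _ = (1 - γ)⁻¹ := tsum_geometric_of_lt_one h0 h1

lemma DTV_nonneg (p q : A → ℝ) : 0 ≤ DTV p q :=
  mul_nonneg (by norm_num) (Finset.sum_nonneg fun a _ => abs_nonneg _)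

lemma dvisit_l1_bound [Nonempty S] (M : FinMDP S A) {π β : S → A → ℝ}
    (hπ : IsPolicy π) (hβ : IsPolicy β) :
    (1 - M.γ) * ∑ s, |dVisit M π s - dVisit M β s|
      ≤ 2 * M.γ * ∑ s, dVisit M β s * DTV (β s) (π s) := by
  have hγ1 : (0:ℝ) < 1 - M.γ := by linarith [M.γ_lt_one]
  set DT : S → ℝ := fun s => DTV (β s) (π s) with hDT
  set δ : ℕ → ℝ := fun k => ∑ s, stateDist M β k s * DT s with hδ
  set CD : ℝ := univ.sup' univ_nonempty fun s => |DT s| with hCD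
  have hDTn : ∀ s, 0 ≤ DT s := fun s => DTV_nonneg _ _
  have hCD0 : 0 ≤ CD := le_trans (abs_nonneg (DT (Classical.arbitrary S)))
    (by rw [hCD]; exact Finset.le_sup' (fun s => |DT s|) (mem_univ _))
  have hδ0 : ∀ k, 0 ≤ δ k := fun k =>
    Finset.sum_nonneg fun s _ => mul_nonneg (stateDist_nonneg M hβ k s) (hDTn s)
  have hδC : ∀ k, |δ k| ≤ CD := fun k =>
    absexp_le _ _ (stateDist_nonneg M hβ k) (stateDist_sum M hβ k) CD fun s => by
      rw [hCD]; exact Finset.le_sup' (fun s => |DT s|) (mem_univ s)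
  have hsumδ : Summable fun k => M.γ ^ k * δ k := summable_geom_mul M CD _ hδC
  set Δ : ℕ → S → ℝ := fun t s => stateDist M π t s - stateDist M β t s with hΔ
  have hΔ2 : ∀ t s, |Δ t s| ≤ 2 := by
    intro t s
    rw [hΔ]
    calc |stateDist M π t s - stateDist M β t s|
        ≤ |stateDist M π t s| + |stateDist M β t s| := abs_sub _ _
      _ ≤ 1 + 1 := add_le_add
          (by rw [abs_of_nonneg (stateDist_nonneg M hπ t s)]; exact stateDist_le_one M hπ t s)
          (by rw [abs_of_nonneg (stateDist_nonneg M hβ t s)]; exact stateDist_le_one M hβ t s)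
      _ = 2 := by norm_num
  have hsumabs : ∀ s, Summable fun t => M.γ ^ t * |Δ t s| :=
    fun s => summable_geom_mul M 2 _ fun t => by rw [abs_abs]; exact hΔ2 t s
  -- Step A
  have stepA : ∀ s, |dVisit M π s - dVisit M β s| ≤ (1 - M.γ) * ∑' t, M.γ ^ t * |Δ t s| := by
    intro s
    have h1 : Summable fun t => M.γ ^ t * stateDist M π t s :=
      summable_geom_mul M 1 _ fun t => by
        rw [abs_of_nonneg (stateDist_nonneg M hπ t s)]; exact stateDist_le_one M hπ t s
    have h2 : Summable fun t => M.γ ^ t * stateDist M β t s :=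
      summable_geom_mul M 1 _ fun t => by
        rw [abs_of_nonneg (stateDist_nonneg M hβ t s)]; exact stateDist_le_one M hβ t s
    have hdiff : dVisit M π s - dVisit M β s
        = (1 - M.γ) * ∑' t, (M.γ ^ t * stateDist M π t s - M.γ ^ t * stateDist M β t s) := by
      unfold dVisit
      rw [Summable.tsum_sub h1 h2]
      ring
    have hnorm : ∀ t, ‖M.γ ^ t * stateDist M π t s - M.γ ^ t * stateDist M β t s‖
        = M.γ ^ t * |Δ t s| := by
      intro t
      simp only [hΔ]
      rw [Real.norm_eq_abs, ← mul_sub, abs_mul, abs_pow, abs_of_nonneg M.γ_nonneg]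
    have hsub : Summable fun t =>
        ‖M.γ ^ t * stateDist M π t s - M.γ ^ t * stateDist M β t s‖ :=
      (hsumabs s).congr fun t => (hnorm t).symm
    rw [hdiff, abs_mul, abs_of_nonneg hγ1.le]
    refine mul_le_mul_of_nonneg_left ?_ hγ1.le
    calc |∑' t, (M.γ ^ t * stateDist M π t s - M.γ ^ t * stateDist M β t s)|
        ≤ ∑' t, ‖M.γ ^ t * stateDist M π t s - M.γ ^ t * stateDist M β t s‖ :=
          norm_tsum_le_tsum_norm hsub
      _ = ∑' t, M.γ ^ t * |Δ t s| := tsum_congr hnorm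
  -- Step B
  set L : ℕ → ℝ := fun t => ∑ s, |Δ t s| with hL
  have stepB : ∑ s, |dVisit M π s - dVisit M β s| ≤ (1 - M.γ) * ∑' t, M.γ ^ t * L t := by
    calc ∑ s, |dVisit M π s - dVisit M β s|
        ≤ ∑ s, (1 - M.γ) * ∑' t, M.γ ^ t * |Δ t s| := Finset.sum_le_sum fun s _ => stepA s
      _ = (1 - M.γ) * ∑ s, ∑' t, M.γ ^ t * |Δ t s| := by rw [Finset.mul_sum]
      _ = (1 - M.γ) * ∑' t, ∑ s, M.γ ^ t * |Δ t s| := by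
          rw [← Summable.tsum_finsetSum fun s _ => hsumabs s]
      _ = (1 - M.γ) * ∑' t, M.γ ^ t * L t := by
          congr 1
          exact tsum_congr fun t => by rw [hL, Finset.mul_sum]
  -- bounds on L
  have hL0 : ∀ t, 0 ≤ L t := fun t => Finset.sum_nonneg fun s _ => abs_nonneg _
  have hLb : ∀ t, L t ≤ 2 * ∑ k ∈ Finset.range t, δ k := by
    intro t
    rw [hL, hδ]
    simpa using l1_diff_bound M hπ hβ t
  have hsumL : Summable fun t => M.γ ^ t * L t := by
    refine summable_geom_mul M (2 * Fintype.card S) _ fun t => ?_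
    rw [abs_of_nonneg (hL0 t), hL]
    calc ∑ s, |Δ t s| ≤ ∑ s : S, (2:ℝ) := Finset.sum_le_sum fun s _ => hΔ2 t s
      _ = Fintype.card S * 2 := by rw [Finset.sum_const, Finset.card_univ]; ring
      _ = 2 * Fintype.card S := by ring
  have hsumR : Summable fun t => M.γ ^ t * (2 * ∑ k ∈ Finset.range t, δ k) := by
    refine Summable.of_norm_bounded
      ((summable_pow_mul_geometric_of_norm_lt_one (R := ℝ) 1
        (by rw [Real.norm_eq_abs, abs_of_nonneg M.γ_nonneg]; exact M.γ_lt_one)).mul_left (2 * CD))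
      fun t => ?_
    rw [Real.norm_eq_abs, abs_mul, abs_pow, abs_of_nonneg M.γ_nonneg]
    have h1 : |2 * ∑ k ∈ Finset.range t, δ k| ≤ 2 * (t * CD) := by
      rw [abs_mul, abs_of_nonneg (Finset.sum_nonneg fun k _ => hδ0 k)]
      -- |2| * ∑ ≤ 2 * (t * CD)
      have h2 : ∑ k ∈ Finset.range t, δ k ≤ ∑ k ∈ Finset.range t, CD :=
        Finset.sum_le_sum fun k _ => (le_abs_self _).trans (hδC k)
      simp only [Finset.sum_const, Finset.card_range, nsmul_eq_mul] at h2
      rw [abs_two]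
      linarith
    calc M.γ ^ t * |2 * ∑ k ∈ Finset.range t, δ k| ≤ M.γ ^ t * (2 * (t * CD)) :=
          mul_le_mul_of_nonneg_left h1 (pow_nonneg M.γ_nonneg t)
      _ = 2 * CD * ((t:ℝ) ^ 1 * M.γ ^ t) := by ring
  -- Step C+D
  have stepD : ∑' t, M.γ ^ t * (2 * ∑ k ∈ Finset.range t, δ k)
      ≤ 2 * M.γ / (1 - M.γ) * ∑' k, M.γ ^ k * δ k := by
    refine Real.tsum_le_of_sum_range_le
      (fun t => mul_nonneg (pow_nonneg M.γ_nonneg t)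
        (mul_nonneg (by norm_num) (Finset.sum_nonneg fun k _ => hδ0 k))) fun N => ?_
    have hswap : ∑ t ∈ Finset.range N, M.γ ^ t * (2 * ∑ k ∈ Finset.range t, δ k)
        = ∑ k ∈ Finset.range N, ∑ t ∈ Finset.Ico (k+1) N, 2 * (M.γ ^ t * δ k) := by
      have h0 : ∀ t ∈ Finset.range N, M.γ ^ t * (2 * ∑ k ∈ Finset.range t, δ k)
          = ∑ k ∈ Finset.range t, 2 * (M.γ ^ t * δ k) := by
        intro t _
        rw [Finset.mul_sum, Finset.mul_sum]
        exact Finset.sum_congr rfl fun k _ => by ring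
      rw [Finset.sum_congr rfl h0]
      exact Finset.sum_comm' fun t k => by
        simp only [Finset.mem_range, Finset.mem_Ico]
        omega
    rw [hswap]
    calc ∑ k ∈ Finset.range N, ∑ t ∈ Finset.Ico (k+1) N, 2 * (M.γ ^ t * δ k)
        ≤ ∑ k ∈ Finset.range N, 2 * M.γ / (1 - M.γ) * (M.γ ^ k * δ k) := by
          refine Finset.sum_le_sum fun k _ => ?_
          have : ∑ t ∈ Finset.Ico (k+1) N, 2 * (M.γ ^ t * δ k)
              = 2 * δ k * ∑ t ∈ Finset.Ico (k+1) N, M.γ ^ t := by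
            rw [Finset.mul_sum]
            exact Finset.sum_congr rfl fun t _ => by ring
          rw [this]
          calc 2 * δ k * ∑ t ∈ Finset.Ico (k+1) N, M.γ ^ t
              ≤ 2 * δ k * (M.γ ^ (k+1) / (1 - M.γ)) :=
                mul_le_mul_of_nonneg_left (geom_Ico_le M.γ M.γ_nonneg M.γ_lt_one k N)
                  (by have := hδ0 k; linarith)
            _ = 2 * M.γ / (1 - M.γ) * (M.γ ^ k * δ k) := by
                rw [pow_succ]
                field_simp
      _ ≤ 2 * M.γ / (1 - M.γ) * ∑' k, M.γ ^ k * δ k := by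
          rw [← Finset.mul_sum]
          refine mul_le_mul_of_nonneg_left ?_
            (div_nonneg (by linarith [M.γ_nonneg]) hγ1.le)
          exact Summable.sum_le_tsum _ (fun k _ => mul_nonneg (pow_nonneg M.γ_nonneg k) (hδ0 k)) hsumδ
  have stepC : ∑' t, M.γ ^ t * L t ≤ ∑' t, M.γ ^ t * (2 * ∑ k ∈ Finset.range t, δ k) :=
    Summable.tsum_le_tsum (fun t => mul_le_mul_of_nonneg_left (hLb t) (pow_nonneg M.γ_nonneg t))
      hsumL hsumR
  have hpair : ∑ s, dVisit M β s * DT s = (1 - M.γ) * ∑' k, M.γ ^ k * δ k :=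
    dVisit_pair M hβ DT
  calc (1 - M.γ) * ∑ s, |dVisit M π s - dVisit M β s|
      ≤ (1 - M.γ) * ((1 - M.γ) * ∑' t, M.γ ^ t * L t) :=
        mul_le_mul_of_nonneg_left stepB hγ1.le
    _ ≤ (1 - M.γ) * ((1 - M.γ) * (2 * M.γ / (1 - M.γ) * ∑' k, M.γ ^ k * δ k)) := by
        refine mul_le_mul_of_nonneg_left (mul_le_mul_of_nonneg_left ?_ hγ1.le) hγ1.le
        exact stepC.trans stepD
    _ = 2 * M.γ * ((1 - M.γ) * ∑' k, M.γ ^ k * δ k) := by field_simp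
    _ = 2 * M.γ * ∑ s, dVisit M β s * DT s := by rw [hpair]

/-- Improved off-policy lower bound with advantage realignment. -/
theorem offpolicy_lower_bound_realigned [Nonempty S] (M : FinMDP S A)
    (πT βT π : S → A → ℝ)
    (hπT : IsPolicy πT) (hβT : IsPolicy βT) (hπ : IsPolicy π)
    (hβpos : ∀ s a, 0 < βT s a) :
    Jret M π - Jret M πT ≥
      (1 / (1 - M.γ)) * ∑ s, dVisit M βT s * ∑ a, βT s a *
        (π s a / βT s a * Adv M πT s a
          - 2 * M.γ * (univ.sup' univ_nonempty fun s' => |∑ b, π s' b * Adv M πT s' b|)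
              / (1 - M.γ) * DTV (βT s) (π s)) := by
  
  have hγ1 : (0:ℝ) < 1 - M.γ := by linarith [M.γ_lt_one]
  set g : S → ℝ := fun s => ∑ a, π s a * Adv M πT s a with hg
  set ε : ℝ := univ.sup' univ_nonempty fun s' => |∑ b, π s' b * Adv M πT s' b| with hε
  set c : ℝ := 2 * M.γ * ε / (1 - M.γ) with hc
  have hgb : ∀ s, |g s| ≤ ε := by
    intro s
    rw [hε]
    simp only [hg]
    exact Finset.le_sup' (fun s' => |∑ b, π s' b * Adv M πT s' b|) (mem_univ s)
  have hε0 : 0 ≤ ε := le_trans (abs_nonneg _) (hgb (Classical.arbitrary S))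
  -- inner sum simplification
  have hinner : ∀ s, ∑ a, βT s a * (π s a / βT s a * Adv M πT s a - c * DTV (βT s) (π s))
      = g s - c * DTV (βT s) (π s) := by
    intro s
    have key : ∀ a, βT s a * (π s a / βT s a * Adv M πT s a - c * DTV (βT s) (π s))
        = π s a * Adv M πT s a - βT s a * (c * DTV (βT s) (π s)) := by
      intro a
      have hb : βT s a ≠ 0 := (hβpos s a).ne'
      have h1 : βT s a * (π s a / βT s a * Adv M πT s a) = π s a * Adv M πT s a := by
        rw [← mul_assoc, mul_comm (βT s a) (π s a / βT s a), div_mul_cancel₀ _ hb]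
      rw [mul_sub, h1]
    calc ∑ a, βT s a * (π s a / βT s a * Adv M πT s a - c * DTV (βT s) (π s))
        = ∑ a, (π s a * Adv M πT s a - βT s a * (c * DTV (βT s) (π s))) :=
          Finset.sum_congr rfl fun a _ => key a
      _ = (∑ a, π s a * Adv M πT s a) - (∑ a, βT s a) * (c * DTV (βT s) (π s)) := by
          rw [Finset.sum_sub_distrib, ← Finset.sum_mul]
      _ = g s - c * DTV (βT s) (π s) := by
          rw [hβT.2, one_mul]
  have hR : ∑ s, dVisit M βT s * ∑ a, βT s a *
        (π s a / βT s a * Adv M πT s a - c * DTV (βT s) (π s))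
      = (∑ s, dVisit M βT s * g s)
        - c * ∑ s, dVisit M βT s * DTV (βT s) (π s) := by
    calc ∑ s, dVisit M βT s * ∑ a, βT s a *
          (π s a / βT s a * Adv M πT s a - c * DTV (βT s) (π s))
        = ∑ s, (dVisit M βT s * g s - c * (dVisit M βT s * DTV (βT s) (π s))) :=
          Finset.sum_congr rfl fun s _ => by rw [hinner s]; ring
      _ = _ := by rw [Finset.sum_sub_distrib, ← Finset.mul_sum]
  -- performance difference
  have hpd : Jret M π - Jret M πT = ∑' t, M.γ ^ t * ∑ s, stateDist M π t s * g s := by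
    rw [perf_diff M hπT hπ]
  have hpairπ : ∑ s, dVisit M π s * g s
      = (1 - M.γ) * ∑' t, M.γ ^ t * ∑ s, stateDist M π t s * g s := dVisit_pair M hπ g
  have hJ : Jret M π - Jret M πT = (1 / (1 - M.γ)) * ∑ s, dVisit M π s * g s := by
    rw [hpd, hpairπ]
    field_simp
  -- key inequality
  have hl1 := dvisit_l1_bound M hπ hβT
  have hΔle : ∑ s, |dVisit M π s - dVisit M βT s|
      ≤ 2 * M.γ * (∑ s, dVisit M βT s * DTV (βT s) (π s)) / (1 - M.γ) := by
    rw [le_div_iff₀ hγ1]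
    linarith [hl1]
  have h5 : ε * ∑ s, |dVisit M π s - dVisit M βT s|
      ≤ c * ∑ s, dVisit M βT s * DTV (βT s) (π s) := by
    calc ε * ∑ s, |dVisit M π s - dVisit M βT s|
        ≤ ε * (2 * M.γ * (∑ s, dVisit M βT s * DTV (βT s) (π s)) / (1 - M.γ)) :=
          mul_le_mul_of_nonneg_left hΔle hε0
      _ = c * ∑ s, dVisit M βT s * DTV (βT s) (π s) := by
          rw [hc]
          field_simp
  have h1 : ∀ s, -(|dVisit M π s - dVisit M βT s| * ε)
      ≤ dVisit M π s * g s - dVisit M βT s * g s := by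
    intro s
    have heq : dVisit M π s * g s - dVisit M βT s * g s
        = (dVisit M π s - dVisit M βT s) * g s := by ring
    rw [heq]
    have h2 : |(dVisit M π s - dVisit M βT s) * g s|
        ≤ |dVisit M π s - dVisit M βT s| * ε := by
      rw [abs_mul]
      exact mul_le_mul_of_nonneg_left (hgb s) (abs_nonneg _)
    have h3 := neg_abs_le ((dVisit M π s - dVisit M βT s) * g s)
    linarith
  have h4 : -(ε * ∑ s, |dVisit M π s - dVisit M βT s|)
      ≤ ∑ s, (dVisit M π s * g s - dVisit M βT s * g s) := by
    have ha : ∑ s, -(|dVisit M π s - dVisit M βT s| * ε)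
        = -(ε * ∑ s, |dVisit M π s - dVisit M βT s|) := by
      rw [Finset.mul_sum, ← Finset.sum_neg_distrib]
      exact Finset.sum_congr rfl fun s _ => by ring
    rw [← ha]
    exact Finset.sum_le_sum fun s _ => h1 s
  have hkey : (∑ s, dVisit M βT s * g s)
      - c * ∑ s, dVisit M βT s * DTV (βT s) (π s) ≤ ∑ s, dVisit M π s * g s := by
    have hsplit : ∑ s, (dVisit M π s * g s - dVisit M βT s * g s)
        = (∑ s, dVisit M π s * g s) - ∑ s, dVisit M βT s * g s :=
      Finset.sum_sub_distrib _ _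
    rw [hsplit] at h4
    linarith
  rw [ge_iff_le, hJ, hR]
  exact mul_le_mul_of_nonneg_left hkey (le_of_lt (by positivity))
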